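/- For u = ⌊(4n+7)/5⌋, the set S₀ = {(x,y) ∈ {1,...,n}² : u ≤ x + y ≤ 2u − 1} is sum-free and has size at least (3/5)n² − O(n); more precisely |S₀| ≥ (3/5)n² − 5n. -/

import Mathlib

lemma gauss : ∀ N : ℕ, 2 * ∑ x ∈ Finset.Icc (1:ℤ) (N:ℤ), x = N * (N + 1) := by
  intro N
  induction N with
  | zero => simp
  | succ k ih =>
    have h : Finset.Icc (1:ℤ) ((k+1:ℕ):ℤ) = insert ((k:ℤ)+1) (Finset.Icc (1:ℤ) (k:ℤ)) := by
      ext a; simp only [Finset.mem_insert, Finset.mem_Icc]; push_cast; omega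
    rw [h, Finset.sum_insert (by simp)]
    push_cast
    ring_nf
    ring_nf at ih
    linarith

lemma tri (n m : ℤ) :
    2 * ((((Finset.Icc 1 n) ×ˢ (Finset.Icc 1 n)).filter
      (fun p : ℤ × ℤ => p.1 + p.2 ≤ m)).card : ℤ) ≤ m * (m - 1) := by
  by_cases hm : m ≤ 1
  · have he : (((Finset.Icc 1 n) ×ˢ (Finset.Icc 1 n)).filter
        (fun p : ℤ × ℤ => p.1 + p.2 ≤ m)) = ∅ := by
      rw [Finset.filter_eq_empty_iff]
      rintro ⟨x, y⟩ hp
      simp only [Finset.mem_product, Finset.mem_Icc] at hp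
      simp only []
      omega
    rw [he]
    simp only [Finset.card_empty, Nat.cast_zero, mul_zero]
    rcases le_or_gt m 0 with h | h
    · nlinarith
    · have hm1 : m = 1 := by omega
      simp [hm1]
  · push_neg at hm
    set L := (((Finset.Icc 1 n) ×ˢ (Finset.Icc 1 n)).filter
      (fun p : ℤ × ℤ => p.1 + p.2 ≤ m)) with hL
    have hsub : L ⊆ (Finset.Icc (1:ℤ) (m-1)).biUnion
        (fun x => {x} ×ˢ Finset.Icc (1:ℤ) (m - x)) := by
      intro p hp
      simp only [hL, Finset.mem_filter, Finset.mem_product, Finset.mem_Icc] at hp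
      simp only [Finset.mem_biUnion, Finset.mem_product, Finset.mem_singleton, Finset.mem_Icc]
      exact ⟨p.1, by omega, rfl, by omega, by omega⟩
    have hcard : ((Finset.Icc (1:ℤ) (m-1)).biUnion
        (fun x => {x} ×ˢ Finset.Icc (1:ℤ) (m - x))).card
        = ∑ x ∈ Finset.Icc (1:ℤ) (m-1), (m - x).toNat := by
      rw [Finset.card_biUnion]
      · apply Finset.sum_congr rfl
        intro x hx
        rw [Finset.card_product, Finset.card_singleton, one_mul, Int.card_Icc]
        congr 1
        omega
      · intro a _ b _ hab
        simp only [Finset.disjoint_left, Finset.mem_product, Finset.mem_singleton]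
        rintro p ⟨rfl, -⟩ ⟨h2, -⟩
        exact hab h2
    have h1 : (L.card : ℤ) ≤ ∑ x ∈ Finset.Icc (1:ℤ) (m-1), (m - x) := by
      calc (L.card : ℤ) ≤ (((Finset.Icc (1:ℤ) (m-1)).biUnion
          (fun x => {x} ×ˢ Finset.Icc (1:ℤ) (m - x))).card : ℤ) := by
            exact_mod_cast Finset.card_le_card hsub
        _ = ∑ x ∈ Finset.Icc (1:ℤ) (m-1), ((m - x).toNat : ℤ) := by
            rw [hcard]; push_cast; ring
        _ = ∑ x ∈ Finset.Icc (1:ℤ) (m-1), (m - x) := by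
            apply Finset.sum_congr rfl
            intro x hx
            simp only [Finset.mem_Icc] at hx
            omega
    have h2 : 2 * ∑ x ∈ Finset.Icc (1:ℤ) (m-1), (m - x) = m * (m - 1) := by
      rw [Finset.sum_sub_distrib, Finset.sum_const, nsmul_eq_mul, Int.card_Icc]
      have hN : ((m-1).toNat : ℤ) = m - 1 := by omega
      have hg := gauss (m-1).toNat
      have h3 : Finset.Icc (1:ℤ) (((m-1).toNat:ℕ):ℤ) = Finset.Icc (1:ℤ) (m-1) := by
        rw [hN]
      rw [h3] at hg
      rw [hN] at hg
      rw [show ((m - 1 + 1 - 1).toNat : ℤ) = m - 1 from by omega]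
      nlinarith [hg]
    linarith

theorem stmt_5 (n : ℤ) (hn : 1 ≤ n) :
    let u : ℤ := (4 * n + 7) / 5
    let S₀ : Finset (ℤ × ℤ) :=
      (Finset.Icc 1 n ×ˢ Finset.Icc 1 n).filter
        (fun p => u ≤ p.1 + p.2 ∧ p.1 + p.2 ≤ 2 * u - 1)
    (∀ a ∈ S₀, ∀ b ∈ S₀, a + b ∉ S₀) ∧
    (3 / 5 : ℚ) * (n : ℚ) ^ 2 - 5 * (n : ℚ) ≤ (S₀.card : ℚ) := by
  intro u S₀
  have hudef : u = (4 * n + 7) / 5 := rfl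
  have hu1 : 4 * n + 3 ≤ 5 * u := by omega
  have hu2 : 5 * u ≤ 4 * n + 7 := by omega
  have hS : S₀ = (Finset.Icc 1 n ×ˢ Finset.Icc 1 n).filter
      (fun p => u ≤ p.1 + p.2 ∧ p.1 + p.2 ≤ 2 * u - 1) := rfl
  constructor
  · -- sum-free
    intro a ha b hb hab
    rw [hS, Finset.mem_filter] at ha hb hab
    have h1 := ha.2.1
    have h2 := hb.2.1
    have h3 := hab.2.2
    simp only [Prod.fst_add, Prod.snd_add] at h3
    omega
  · -- cardinality
    set L : Finset (ℤ × ℤ) := (Finset.Icc 1 n ×ˢ Finset.Icc 1 n).filter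
        (fun p : ℤ × ℤ => p.1 + p.2 ≤ u - 1) with hLdef
    set H : Finset (ℤ × ℤ) := (Finset.Icc 1 n ×ˢ Finset.Icc 1 n).filter
        (fun p : ℤ × ℤ => 2 * u ≤ p.1 + p.2) with hHdef
    -- cover
    have hcover : (Finset.Icc 1 n ×ˢ Finset.Icc 1 n) ⊆ S₀ ∪ L ∪ H := by
      intro p hp
      simp only [Finset.mem_union, hS, hLdef, hHdef, Finset.mem_filter]
      by_cases h1 : p.1 + p.2 ≤ u - 1
      · exact Or.inl (Or.inr ⟨hp, h1⟩)
      · by_cases h2 : 2 * u ≤ p.1 + p.2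
        · exact Or.inr ⟨hp, h2⟩
        · exact Or.inl (Or.inl ⟨hp, by omega, by omega⟩)
    have hsq : ((Finset.Icc 1 n ×ˢ Finset.Icc 1 n).card : ℤ) = n * n := by
      have htn : ((n + 1 - 1).toNat : ℤ) = n := by omega
      rw [Finset.card_product, Int.card_Icc, Nat.cast_mul, htn]
    have hcardcover : (n * n : ℤ) ≤ (S₀.card : ℤ) + L.card + H.card := by
      have h1 : (Finset.Icc 1 n ×ˢ Finset.Icc 1 n).card ≤ (S₀ ∪ L ∪ H).card :=
        Finset.card_le_card hcover
      have h2 : (S₀ ∪ L ∪ H).card ≤ S₀.card + L.card + H.card :=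
        le_trans (Finset.card_union_le _ _)
          (by exact Nat.add_le_add_right (Finset.card_union_le S₀ L) _)
      rw [← hsq]
      exact_mod_cast le_trans h1 h2
    -- bound L
    have hLb : 2 * (L.card : ℤ) ≤ (u - 1) * (u - 2) := by
      have := tri n (u - 1)
      calc 2 * (L.card : ℤ) ≤ (u-1) * ((u-1) - 1) := this
        _ = (u - 1) * (u - 2) := by ring
    -- bound H via reflection into a triangle
    have hHb : 2 * (H.card : ℤ) ≤ (2*n + 2 - 2*u) * (2*n + 1 - 2*u) := by
      have hinj : H.card ≤ (((Finset.Icc 1 n) ×ˢ (Finset.Icc 1 n)).filter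
          (fun p : ℤ × ℤ => p.1 + p.2 ≤ 2*n + 2 - 2*u)).card := by
        apply Finset.card_le_card_of_injOn (fun p => (n + 1 - p.1, n + 1 - p.2))
        · intro p hp
          simp only [hHdef, Finset.mem_coe, Finset.mem_filter, Finset.mem_product, Finset.mem_Icc] at hp ⊢
          obtain ⟨⟨⟨a1, a2⟩, b1, b2⟩, hsum⟩ := hp
          exact ⟨⟨⟨by omega, by omega⟩, by omega, by omega⟩, by omega⟩
        · intro p _ q _ hpq
          simp only [Prod.mk.injEq] at hpq
          exact Prod.ext (by omega) (by omega)
      have := tri n (2*n + 2 - 2*u)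
      calc 2 * (H.card : ℤ) ≤ 2 * ((((Finset.Icc 1 n) ×ˢ (Finset.Icc 1 n)).filter
            (fun p : ℤ × ℤ => p.1 + p.2 ≤ 2*n + 2 - 2*u)).card : ℤ) := by
            exact_mod_cast Nat.mul_le_mul_left 2 hinj
        _ ≤ (2*n + 2 - 2*u) * ((2*n + 2 - 2*u) - 1) := this
        _ = (2*n + 2 - 2*u) * (2*n + 1 - 2*u) := by ring
    -- combine in ℤ
    have hkey : 6 * n^2 - 50 * n ≤ 10 * (S₀.card : ℤ) := by
      nlinarith [mul_nonneg (by omega : (0:ℤ) ≤ 5*u - 4*n - 3)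
        (by omega : (0:ℤ) ≤ 4*n + 7 - 5*u), hcardcover, hLb, hHb, hn]
    have hkeyQ : (6:ℚ) * (n:ℚ)^2 - 50 * (n:ℚ) ≤ 10 * (S₀.card : ℚ) := by
      exact_mod_cast hkey
    linarith
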